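/- Every C¹-smooth function F : ℝ³ → ℝ satisfying ∂F/∂uᵢ(u) = aᵢ(e^{u₁}, e^{u₂}, e^{u₃}) for all u ∈ ℝ³ and i = 1,2,3 satisfies the translation identity F(u + (k,k,k)) = F(u) + kπ for all u ∈ ℝ³ and all k ∈ ℝ. -/

import Mathlib

noncomputable section

open Real Set Filter

/-- The generalized Euclidean triangle angle `aᵢ(x)` opposite the side of length `x i`,
for a generalized triangle with (positive) side lengths `x 0, x 1, x 2`:
it is `π` if `x i ≥ x j + x k`, `0` if some other side is at least the sum of the
remaining two, and otherwise the usual Euclidean angle `arccos((xⱼ²+x_k²−xᵢ²)/(2xⱼx_k))`. -/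
noncomputable def genAngle (x : Fin 3 → ℝ) (i : Fin 3) : ℝ :=
  if x (i + 1) + x (i + 2) ≤ x i then Real.pi
  else if x i + x (i + 2) ≤ x (i + 1) ∨ x i + x (i + 1) ≤ x (i + 2) then 0
  else Real.arccos
    ((x (i + 1) ^ 2 + x (i + 2) ^ 2 - x i ^ 2) / (2 * x (i + 1) * x (i + 2)))

lemma angle_arccos (p1 p2 p3 : EuclideanSpace ℝ (Fin 2)) (h1 : p1 ≠ p2) (h3 : p3 ≠ p2) :
    EuclideanGeometry.angle p1 p2 p3 =
      Real.arccos ((dist p1 p2 ^ 2 + dist p3 p2 ^ 2 - dist p1 p3 ^ 2) /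
        (2 * dist p1 p2 * dist p3 p2)) := by
  have hc := EuclideanGeometry.law_cos p1 p2 p3
  have hd1 : (0:ℝ) < dist p1 p2 := dist_pos.2 h1
  have hd3 : (0:ℝ) < dist p3 p2 := dist_pos.2 h3
  have hkey : (dist p1 p2 ^ 2 + dist p3 p2 ^ 2 - dist p1 p3 ^ 2) /
      (2 * dist p1 p2 * dist p3 p2) = Real.cos (EuclideanGeometry.angle p1 p2 p3) := by
    field_simp
    linear_combination -hc
  rw [hkey, Real.arccos_cos (EuclideanGeometry.angle_nonneg _ _ _)
    (EuclideanGeometry.angle_le_pi _ _ _)]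

set_option maxHeartbeats 1000000 in
lemma genAngle_sum (x : Fin 3 → ℝ) (hx : ∀ i, 0 < x i) :
    genAngle x 0 + genAngle x 1 + genAngle x 2 = Real.pi := by
  have h0 := hx 0; have h1 := hx 1; have h2 := hx 2
  have e0 : genAngle x 0 = if x 1 + x 2 ≤ x 0 then Real.pi
      else if x 0 + x 2 ≤ x 1 ∨ x 0 + x 1 ≤ x 2 then 0
      else Real.arccos ((x 1 ^ 2 + x 2 ^ 2 - x 0 ^ 2) / (2 * x 1 * x 2)) := by simp [genAngle]
  have e1 : genAngle x 1 = if x 2 + x 0 ≤ x 1 then Real.pi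
      else if x 1 + x 0 ≤ x 2 ∨ x 1 + x 2 ≤ x 0 then 0
      else Real.arccos ((x 2 ^ 2 + x 0 ^ 2 - x 1 ^ 2) / (2 * x 2 * x 0)) := by simp [genAngle]
  have e2 : genAngle x 2 = if x 0 + x 1 ≤ x 2 then Real.pi
      else if x 2 + x 1 ≤ x 0 ∨ x 2 + x 0 ≤ x 1 then 0
      else Real.arccos ((x 0 ^ 2 + x 1 ^ 2 - x 2 ^ 2) / (2 * x 0 * x 1)) := by simp [genAngle]
  rcases le_or_gt (x 1 + x 2) (x 0) with hA | hA
  · rw [e0, e1, e2, if_pos hA, if_neg (by linarith), if_pos (Or.inr (by linarith)),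
      if_neg (by linarith), if_pos (Or.inl (by linarith))]
    ring
  rcases le_or_gt (x 2 + x 0) (x 1) with hB | hB
  · rw [e0, e1, e2, if_neg (by linarith), if_pos (Or.inl (by linarith)), if_pos hB,
      if_neg (by linarith), if_pos (Or.inr (by linarith))]
    ring
  rcases le_or_gt (x 0 + x 1) (x 2) with hC | hC
  · rw [e0, e1, e2, if_neg (by linarith), if_pos (Or.inr (by linarith)),
      if_neg (by linarith), if_pos (Or.inl (by linarith)), if_pos hC]
    ring
  -- nondegenerate case
  set a := x 0 with ha; set b := x 1 with hb; set c := x 2 with hc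
  set p : ℝ := (b ^ 2 + c ^ 2 - a ^ 2) / (2 * c) with hp
  have hq2 : 0 < b ^ 2 - p ^ 2 := by
    have key : (2 * c) ^ 2 * (b ^ 2 - p ^ 2) =
        (a + b + c) * (b + c - a) * (a + b - c) * (a - b + c) := by
      rw [hp]; field_simp; ring
    nlinarith [sq_nonneg c, mul_pos (mul_pos (mul_pos (by linarith : (0:ℝ) < a + b + c)
      (by linarith : (0:ℝ) < b + c - a)) (by linarith : (0:ℝ) < a + b - c))
      (by linarith : (0:ℝ) < a - b + c)]
  set q : ℝ := Real.sqrt (b ^ 2 - p ^ 2) with hqdef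
  have hq : q ^ 2 = b ^ 2 - p ^ 2 := Real.sq_sqrt hq2.le
  set P0 : EuclideanSpace ℝ (Fin 2) := (WithLp.equiv 2 (Fin 2 → ℝ)).symm ![0, 0] with hP0
  set P1 : EuclideanSpace ℝ (Fin 2) := (WithLp.equiv 2 (Fin 2 → ℝ)).symm ![c, 0] with hP1
  set P2 : EuclideanSpace ℝ (Fin 2) := (WithLp.equiv 2 (Fin 2 → ℝ)).symm ![p, q] with hP2
  have d01 : dist P0 P1 = c := by
    rw [EuclideanSpace.dist_eq]
    simp [hP0, hP1, Fin.sum_univ_two, Real.dist_eq]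
    exact Real.sqrt_sq h2.le
  have d02 : dist P0 P2 = b := by
    rw [EuclideanSpace.dist_eq]
    simp [hP0, hP2, Fin.sum_univ_two, Real.dist_eq]
    rw [show p ^ 2 + q ^ 2 = b ^ 2 by linear_combination hq]
    exact Real.sqrt_sq h1.le
  have d12 : dist P1 P2 = a := by
    rw [EuclideanSpace.dist_eq]
    simp [hP1, hP2, Fin.sum_univ_two, Real.dist_eq]
    rw [show (c - p) ^ 2 + q ^ 2 = a ^ 2 by
      have hpc : p * (2 * c) = b ^ 2 + c ^ 2 - a ^ 2 := by
        rw [hp]; exact div_mul_cancel₀ _ (mul_pos two_pos h2).ne'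
      linear_combination hq - hpc]
    exact Real.sqrt_sq h0.le
  have hne10 : P1 ≠ P0 := by
    intro h; rw [h, dist_self] at d01; linarith
  have hne20 : P2 ≠ P0 := by
    intro h; rw [h, dist_self] at d02; linarith
  have hne01 : P0 ≠ P1 := hne10.symm
  have hne21 : P2 ≠ P1 := by
    intro h; rw [h, dist_self] at d12; linarith
  have hne12 : P1 ≠ P2 := hne21.symm
  have hne02 : P0 ≠ P2 := hne20.symm
  have hsum := EuclideanGeometry.angle_add_angle_add_angle_eq_pi (p₂ := P1) (p₃ := P2) hne10
  -- angle at P1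
  have A1 : EuclideanGeometry.angle P0 P1 P2 =
      Real.arccos ((c ^ 2 + a ^ 2 - b ^ 2) / (2 * c * a)) := by
    rw [angle_arccos P0 P1 P2 hne01 hne21, d01, dist_comm P2 P1, d12, d02]
  have A2 : EuclideanGeometry.angle P1 P2 P0 =
      Real.arccos ((a ^ 2 + b ^ 2 - c ^ 2) / (2 * a * b)) := by
    rw [angle_arccos P1 P2 P0 hne12 hne02, d12, d02, dist_comm P1 P0, d01]
  have A0 : EuclideanGeometry.angle P2 P0 P1 =
      Real.arccos ((b ^ 2 + c ^ 2 - a ^ 2) / (2 * b * c)) := by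
    rw [angle_arccos P2 P0 P1 hne20 hne10, dist_comm P2 P0, d02, dist_comm P1 P0, d01, dist_comm P2 P1, d12]
  rw [A1, A2, A0] at hsum
  rw [e0, e1, e2, if_neg (by linarith), if_neg (by push_neg; constructor <;> linarith),
    if_neg (by linarith), if_neg (by push_neg; constructor <;> linarith),
    if_neg (by linarith), if_neg (by push_neg; constructor <;> linarith)]
  linarith [hsum]

/-- any `C¹` function `F : ℝ³ → ℝ` with
`∂F/∂uᵢ(u) = aᵢ(e^{u₁}, e^{u₂}, e^{u₃})` satisfies `F(u + (k,k,k)) = F(u) + kπ`. -/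
theorem translation_identity_of_potential (F : (Fin 3 → ℝ) → ℝ)
    (hF : ContDiff ℝ 1 F)
    (hgrad : ∀ (u : Fin 3 → ℝ) (i : Fin 3),
      fderiv ℝ F u (Pi.single i 1) = genAngle (fun j => Real.exp (u j)) i) :
    ∀ (u : Fin 3 → ℝ) (k : ℝ), F (fun j => u j + k) = F u + k * Real.pi := by
  intro u k
  have key : ∀ v : Fin 3 → ℝ, fderiv ℝ F v (fun _ => 1) = Real.pi := by
    intro v
    have hone : (fun _ => (1:ℝ) : Fin 3 → ℝ) = ∑ i, Pi.single i 1 :=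
      (Finset.univ_sum_single (fun _ => (1:ℝ))).symm
    rw [hone, map_sum]
    rw [Fin.sum_univ_three, hgrad, hgrad, hgrad]
    exact genAngle_sum _ (fun j => Real.exp_pos _)
  set one3 : Fin 3 → ℝ := fun _ => 1 with hone3
  set L : ℝ → (Fin 3 → ℝ) := fun t => u + t • one3 with hLdef
  have hL : ∀ t, HasDerivAt L one3 t := by
    intro t
    have := ((hasDerivAt_id t).smul_const one3).const_add u
    rw [one_smul] at this; exact this
  have hg : ∀ t, HasDerivAt (fun t => F (L t)) Real.pi t := by
    intro t
    have hdF := (hF.differentiable one_ne_zero (L t)).hasFDerivAt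
    have := hdF.comp_hasDerivAt t (hL t)
    rwa [key (L t)] at this
  have hdiff : Differentiable ℝ (fun t => F (L t) - t * Real.pi) := fun t =>
    ((hg t).sub ((hasDerivAt_id t).mul_const Real.pi)).differentiableAt
  have hderiv : ∀ t, deriv (fun t => F (L t) - t * Real.pi) t = 0 := by
    intro t
    have := ((hg t).sub ((hasDerivAt_id t).mul_const Real.pi)).deriv
    exact this.trans (by ring)
  have hconst := is_const_of_deriv_eq_zero hdiff hderiv k 0
  have hL0 : L 0 = u := by funext j; simp [hLdef, hone3]
  have hLk : L k = fun j => u j + k := by funext j; simp [hLdef, hone3]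
  rw [hL0, hLk] at hconst
  simp only [zero_mul, sub_zero] at hconst
  linarith [hconst]
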